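/- Let r ≥ 2 be an integer, let b : ℂ^r × ℂ^r → ℂ be a nonzero symmetric bilinear form, let (w_1,…,w_r) be a basis of ℂ^r, fix 1 ≤ i ≤ r−1, and let W_i denote the span of w_1,…,w_i. Define μ_i := −min{ γ^{(i)}_j + γ^{(i)}_k : j,k ∈ {1,…,r}, b(w_j,w_k) ≠ 0 }. Then μ_i = 2r − 2i if b restricted to W_i × W_i is nonzero; μ_i = r − 2i if b vanishes on W_i × W_i but b(x,y) ≠ 0 for some x ∈ W_i and y ∈ ℂ^r; and μ_i = −2i if b vanishes on W_i × ℂ^r. In other words, μ_i = c·r − 2i, where c ∈ {0,1,2} is determined by these three cases. -/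

import Mathlib

lemma span_vanish {r : ℕ} (B : (Fin r → ℂ) →ₗ[ℂ] (Fin r → ℂ) →ₗ[ℂ] ℂ)
    {S T : Set (Fin r → ℂ)} (h : ∀ a ∈ S, ∀ b ∈ T, B a b = 0) :
    ∀ x ∈ Submodule.span ℂ S, ∀ y ∈ Submodule.span ℂ T, B x y = 0 := by
  have step1 : ∀ a ∈ S, ∀ y ∈ Submodule.span ℂ T, B a y = 0 := by
    intro a ha y hy
    have hle : Submodule.span ℂ T ≤ LinearMap.ker (B a) :=
      Submodule.span_le.2 fun b hb => LinearMap.mem_ker.2 (h a ha b hb)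
    exact hle hy
  intro x hx y hy
  have hle : Submodule.span ℂ S ≤ LinearMap.ker (B.flip y) :=
    Submodule.span_le.2 fun a ha => LinearMap.mem_ker.2 (step1 a ha y hy)
  have := hle hx
  simpa using this

/-- Hilbert–Mumford weight for conic bundles: for a nonzero symmetric bilinear
form `b` on `ℂ^r`, a basis `(w_1,…,w_r)`, and `1 ≤ i ≤ r−1`, the weight
`μ_i = −min{ γ^{(i)}_j + γ^{(i)}_k : b(w_j,w_k) ≠ 0 }` (0-based indexing) equals
`2r − 2i` if `b` does not vanish on `W_i × W_i`, equals `r − 2i` if `b` vanishes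
on `W_i × W_i` but not on `W_i × ℂ^r`, and equals `−2i` if `b` vanishes on
`W_i × ℂ^r`, where `W_i = span(w_1,…,w_i)`; i.e. `μ_i = c·r − 2i` with
`c ∈ {0,1,2}` given by these three cases. -/
theorem conic_bundle_weight (r : ℕ) (hr : 2 ≤ r)
    (B : (Fin r → ℂ) →ₗ[ℂ] (Fin r → ℂ) →ₗ[ℂ] ℂ)
    (hBsymm : ∀ x y : Fin r → ℂ, B x y = B y x) (hB : B ≠ 0)
    (w : Module.Basis (Fin r) ℂ (Fin r → ℂ))
    (i : ℕ) (hi1 : 1 ≤ i) (hi2 : i ≤ r - 1) :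
    let γ : Fin r → ℤ := fun k => if (k : ℕ) < i then (i : ℤ) - r else (i : ℤ)
    let W : Submodule ℂ (Fin r → ℂ) := Submodule.span ℂ (⇑w '' {j : Fin r | (j : ℕ) < i})
    let μ : ℤ := -sInf {m : ℤ | ∃ j k : Fin r, B (w j) (w k) ≠ 0 ∧ γ j + γ k = m}
    ((∃ x ∈ W, ∃ y ∈ W, B x y ≠ 0) → μ = 2 * (r : ℤ) - 2 * i) ∧
    ((∀ x ∈ W, ∀ y ∈ W, B x y = 0) → (∃ x ∈ W, ∃ y : Fin r → ℂ, B x y ≠ 0) →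
      μ = (r : ℤ) - 2 * i) ∧
    ((∀ x ∈ W, ∀ y : Fin r → ℂ, B x y = 0) → μ = -(2 * (i : ℤ))) := by
  intro γ W μ
  have hir : i < r := by omega
  set S : Set ℤ := {m : ℤ | ∃ j k : Fin r, B (w j) (w k) ≠ 0 ∧ γ j + γ k = m} with hS
  -- γ bounds
  have hγlb : ∀ j : Fin r, (i : ℤ) - r ≤ γ j := by
    intro j; simp only [γ]; split <;> omega
  have hγlt : ∀ j : Fin r, (j : ℕ) < i → γ j = (i : ℤ) - r := by
    intro j hj; simp [γ, hj]
  have hγge : ∀ j : Fin r, ¬ (j : ℕ) < i → γ j = (i : ℤ) := by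
    intro j hj; simp [γ, hj]
  -- membership in W
  have hwW : ∀ j : Fin r, (j : ℕ) < i → w j ∈ W := by
    intro j hj
    exact Submodule.subset_span ⟨j, hj, rfl⟩
  -- extract basis elements pairing nontrivially
  have hextract : ∀ (T U : Set (Fin r)), (∃ x ∈ Submodule.span ℂ (⇑w '' T),
      ∃ y ∈ Submodule.span ℂ (⇑w '' U), B x y ≠ 0) →
      ∃ j ∈ T, ∃ k ∈ U, B (w j) (w k) ≠ 0 := by
    intro T U hTU
    obtain ⟨x, hx, y, hy, hxy⟩ := hTU
    by_contra hc
    push_neg at hc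
    refine hxy (span_vanish B (fun a ha b hb => ?_) x hx y hy)
    obtain ⟨j, hj, hja⟩ := ha
    obtain ⟨k, hk, hkb⟩ := hb
    rw [← hja, ← hkb]; exact hc j hj k hk
  have htop : ∀ y : Fin r → ℂ, y ∈ Submodule.span ℂ (⇑w '' (Set.univ : Set (Fin r))) := by
    intro y
    rw [Set.image_univ, Module.Basis.span_eq]
    exact Submodule.mem_top
  have hBne : ∃ j k : Fin r, B (w j) (w k) ≠ 0 := by
    by_contra hc
    push_neg at hc
    apply hB
    refine LinearMap.ext fun x => LinearMap.ext fun y => ?_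
    simp only [LinearMap.zero_apply]
    refine span_vanish B (fun a ha b hb => ?_) x (htop x) y (htop y)
    obtain ⟨j, -, hja⟩ := ha
    obtain ⟨k, -, hkb⟩ := hb
    rw [← hja, ← hkb]; exact hc j k
  have hBdd : BddBelow S := by
    refine ⟨2 * (i : ℤ) - 2 * r, ?_⟩
    rintro m ⟨j, k, _, rfl⟩
    have := hγlb j; have := hγlb k; omega
  refine ⟨?_, ?_, ?_⟩
  · -- case 1
    rintro hcase
    have : ∃ j ∈ {j : Fin r | (j : ℕ) < i}, ∃ k ∈ {j : Fin r | (j : ℕ) < i},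
        B (w j) (w k) ≠ 0 := hextract _ _ hcase
    obtain ⟨j, hj, k, hk, hjk⟩ := this
    have hmem : (2 * (i : ℤ) - 2 * r) ∈ S := by
      refine ⟨j, k, hjk, ?_⟩
      rw [hγlt j hj, hγlt k hk]; ring
    have : sInf S = 2 * (i : ℤ) - 2 * r := by
      apply le_antisymm (csInf_le hBdd hmem)
      refine le_csInf ⟨_, hmem⟩ ?_
      rintro m ⟨j, k, _, rfl⟩
      have := hγlb j; have := hγlb k; omega
    simp only [μ, hS] at *
    omega
  · -- case 2
    rintro hvan ⟨x, hx, y, hxy⟩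
    have : ∃ j ∈ {j : Fin r | (j : ℕ) < i}, ∃ k ∈ (Set.univ : Set (Fin r)),
        B (w j) (w k) ≠ 0 := by
      refine hextract _ _ ⟨x, hx, y, htop y, hxy⟩
    obtain ⟨j, hj, k, -, hjk⟩ := this
    have hki : ¬ (k : ℕ) < i := fun hk => hjk (hvan _ (hwW j hj) _ (hwW k hk))
    have hmem : (2 * (i : ℤ) - r) ∈ S := by
      refine ⟨j, k, hjk, ?_⟩
      rw [hγlt j hj, hγge k hki]; ring
    have : sInf S = 2 * (i : ℤ) - r := by
      apply le_antisymm (csInf_le hBdd hmem)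
      refine le_csInf ⟨_, hmem⟩ ?_
      rintro m ⟨j', k', hjk', rfl⟩
      by_cases hj' : (j' : ℕ) < i
      · by_cases hk' : (k' : ℕ) < i
        · exact absurd (hvan _ (hwW j' hj') _ (hwW k' hk')) hjk'
        · rw [hγlt j' hj', hγge k' hk']; omega
      · have := hγlb k'; rw [hγge j' hj']; omega
    simp only [μ, hS] at *
    omega
  · -- case 3
    intro hvan
    obtain ⟨j, k, hjk⟩ := hBne
    have hji : ¬ (j : ℕ) < i := fun hj => hjk (hvan _ (hwW j hj) _)
    have hki : ¬ (k : ℕ) < i := fun hk => hjk (by rw [hBsymm]; exact hvan _ (hwW k hk) _)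
    have hmem : (2 * (i : ℤ)) ∈ S := by
      refine ⟨j, k, hjk, ?_⟩
      rw [hγge j hji, hγge k hki]; ring
    have : sInf S = 2 * (i : ℤ) := by
      apply le_antisymm (csInf_le hBdd hmem)
      refine le_csInf ⟨_, hmem⟩ ?_
      rintro m ⟨j', k', hjk', rfl⟩
      have hj' : ¬ (j' : ℕ) < i := fun hj => hjk' (hvan _ (hwW j' hj) _)
      have hk' : ¬ (k' : ℕ) < i := fun hk => hjk' (by rw [hBsymm]; exact hvan _ (hwW k' hk) _)
      rw [hγge j' hj', hγge k' hk']; omega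
    simp only [μ, hS] at *
    omega
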